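/- arXiv:1907.08865 — 2 statements merged into one kernel-verified Lean document; each statement's English description precedes it below -/
import Mathlib

section
/- A vertex-colored graph $(G,\sigma)$ is a 2-hc-cograph (an hc-cograph using exactly two colors) if and only if $(G,\sigma)$ is a properly 2-colored bicluster graph that contains at least one edge. -/
namespace RBMGPaper

variable {V : Type*} {C : Type*}

/-- `HCOn G σ A` asserts that the subgraph of the vertex-colored graph `(G, σ)` induced on the
vertex set `A` is a hierarchically colored cograph, built recursively via (K1)–(K3). -/
inductive HCOn (G : SimpleGraph V) (σ : V → C) : Set V → Prop
  | single (v : V) : HCOn G σ {v}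
  | join (A B : Set V) (hA : A.Nonempty) (hB : B.Nonempty) (hdisj : Disjoint A B)
      (hadj : ∀ a ∈ A, ∀ b ∈ B, G.Adj a b)
      (hcol : Disjoint (σ '' A) (σ '' B))
      (h1 : HCOn G σ A) (h2 : HCOn G σ B) : HCOn G σ (A ∪ B)
  | union (A B : Set V) (hA : A.Nonempty) (hB : B.Nonempty) (hdisj : Disjoint A B)
      (hadj : ∀ a ∈ A, ∀ b ∈ B, ¬ G.Adj a b)
      (hcol : σ '' A ⊆ σ '' B ∨ σ '' B ⊆ σ '' A)
      (h1 : HCOn G σ A) (h2 : HCOn G σ B) : HCOn G σ (A ∪ B)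

/-- `(G, σ)` is a hierarchically colored cograph (hc-cograph). -/
def IsHCCograph (G : SimpleGraph V) (σ : V → C) : Prop :=
  HCOn G σ Set.univ

/-- `CographOn G A` asserts that the subgraph of `G` induced on `A` is a cograph. -/
inductive CographOn (G : SimpleGraph V) : Set V → Prop
  | single (v : V) : CographOn G {v}
  | union (A B : Set V) (hA : A.Nonempty) (hB : B.Nonempty) (hdisj : Disjoint A B)
      (hadj : ∀ a ∈ A, ∀ b ∈ B, ¬ G.Adj a b)
      (h1 : CographOn G A) (h2 : CographOn G B) : CographOn G (A ∪ B)
  | join (A B : Set V) (hA : A.Nonempty) (hB : B.Nonempty) (hdisj : Disjoint A B)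
      (hadj : ∀ a ∈ A, ∀ b ∈ B, G.Adj a b)
      (h1 : CographOn G A) (h2 : CographOn G B) : CographOn G (A ∪ B)

/-- `G` is a cograph. -/
def IsCograph (G : SimpleGraph V) : Prop := CographOn G Set.univ

/-- The set `s` induces a biclique (complete bipartite graph, possibly `K₁`) in `G`. -/
def IsBiclique (G : SimpleGraph V) (s : Set V) : Prop :=
  ∃ A B : Set V, s = A ∪ B ∧ Disjoint A B ∧
    ∀ u ∈ s, ∀ v ∈ s, (G.Adj u v ↔ ((u ∈ A ∧ v ∈ B) ∨ (u ∈ B ∧ v ∈ A)))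

/-- `G` is a bicluster graph: every connected component is a biclique. -/
def IsBiclusterGraph (G : SimpleGraph V) : Prop :=
  ∀ c : G.ConnectedComponent, IsBiclique G c.supp

/-- `addHub G` is the graph `G + x`: a new vertex (`none`) adjacent to all vertices of `G`. -/
def addHub (G : SimpleGraph V) : SimpleGraph (Option V) where
  Adj u v :=
    (∃ a b, u = some a ∧ v = some b ∧ G.Adj a b) ∨
    (u = none ∧ ∃ b, v = some b) ∨ ((∃ a, u = some a) ∧ v = none)
  symm := by
    constructor
    rintro u v (⟨a, b, rfl, rfl, h⟩ | ⟨rfl, b, rfl⟩ | ⟨⟨a, rfl⟩, rfl⟩)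
    · exact Or.inl ⟨b, a, rfl, rfl, h.symm⟩
    · exact Or.inr (Or.inr ⟨⟨b, rfl⟩, rfl⟩)
    · exact Or.inr (Or.inl ⟨rfl, a, rfl⟩)
  loopless := by
    constructor
    rintro u (⟨a, b, rfl, hb, h⟩ | ⟨rfl, b, hb⟩ | ⟨⟨a, rfl⟩, hb⟩)
    · exact G.irrefl (Option.some_injective V hb ▸ h)
    · exact absurd hb (by simp)
    · exact absurd hb (by simp)


section Aux

variable {G : SimpleGraph V} {σ : V → C}

lemma two_color (h2 : (Set.range σ).ncard = 2) {p q r : V}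
    (h1 : σ p ≠ σ q) (h3 : σ r ≠ σ q) : σ p = σ r := by
  obtain ⟨x, y, hxy, hr⟩ := Set.ncard_eq_two.mp h2
  have hp : σ p ∈ ({x, y} : Set C) := hr ▸ Set.mem_range_self p
  have hq : σ q ∈ ({x, y} : Set C) := hr ▸ Set.mem_range_self q
  have hr' : σ r ∈ ({x, y} : Set C) := hr ▸ Set.mem_range_self r
  simp only [Set.mem_insert_iff, Set.mem_singleton_iff] at hp hq hr'
  rcases hp with hp | hp <;> rcases hq with hq | hq <;> rcases hr' with h' | h' <;> simp_all

lemma hc_proper {S : Set V} (h : HCOn G σ S) :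
    ∀ u ∈ S, ∀ v ∈ S, G.Adj u v → σ u ≠ σ v := by
  induction h with
  | single v =>
    rintro u rfl w rfl hadj
    exact absurd hadj G.irrefl
  | join A B hA hB hdisj hadj hcol h1 h2 ih1 ih2 =>
    rintro u (hu | hu) w (hw | hw) ha
    · exact ih1 u hu w hw ha
    · exact fun he => (Set.disjoint_left.mp hcol ⟨u, hu, rfl⟩) ⟨w, hw, he.symm⟩
    · exact fun he => (Set.disjoint_left.mp hcol ⟨w, hw, rfl⟩) ⟨u, hu, he⟩
    · exact ih2 u hu w hw ha
  | union A B hA hB hdisj hadj hcol h1 h2 ih1 ih2 =>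
    rintro u (hu | hu) w (hw | hw) ha
    · exact ih1 u hu w hw ha
    · exact absurd ha (hadj u hu w hw)
    · exact absurd ha.symm (hadj w hw u hu)
    · exact ih2 u hu w hw ha

lemma hc_edge {S : Set V} (h : HCOn G σ S) :
    ∀ u ∈ S, ∀ v ∈ S, σ u ≠ σ v → ∃ a ∈ S, ∃ b ∈ S, G.Adj a b := by
  induction h with
  | single v =>
    rintro u rfl w rfl hne
    exact absurd rfl hne
  | join A B hA hB hdisj hadj hcol h1 h2 ih1 ih2 =>
    intro u _ v _ _
    obtain ⟨a, ha⟩ := hA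
    obtain ⟨b, hb⟩ := hB
    exact ⟨a, Or.inl ha, b, Or.inr hb, hadj a ha b hb⟩
  | union A B hA hB hdisj hadj hcol h1 h2 ih1 ih2 =>
    rintro u hu v hv hne
    rcases hcol with hAB | hBA
    · have hu' : σ u ∈ σ '' B := by
        rcases hu with hu | hu
        · exact hAB ⟨u, hu, rfl⟩
        · exact ⟨u, hu, rfl⟩
      have hv' : σ v ∈ σ '' B := by
        rcases hv with hv | hv
        · exact hAB ⟨v, hv, rfl⟩
        · exact ⟨v, hv, rfl⟩
      obtain ⟨a, ha, hae⟩ := hu'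
      obtain ⟨b, hb, hbe⟩ := hv'
      obtain ⟨x, hx, y, hy, hxy⟩ := ih2 a ha b hb (by rw [hae, hbe]; exact hne)
      exact ⟨x, Or.inr hx, y, Or.inr hy, hxy⟩
    · have hu' : σ u ∈ σ '' A := by
        rcases hu with hu | hu
        · exact ⟨u, hu, rfl⟩
        · exact hBA ⟨u, hu, rfl⟩
      have hv' : σ v ∈ σ '' A := by
        rcases hv with hv | hv
        · exact ⟨v, hv, rfl⟩
        · exact hBA ⟨v, hv, rfl⟩
      obtain ⟨a, ha, hae⟩ := hu'
      obtain ⟨b, hb, hbe⟩ := hv'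
      obtain ⟨x, hx, y, hy, hxy⟩ := ih1 a ha b hb (by rw [hae, hbe]; exact hne)
      exact ⟨x, Or.inl hx, y, Or.inl hy, hxy⟩

lemma hc_p4 {S : Set V} (h : HCOn G σ S) :
    ∀ a ∈ S, ∀ b ∈ S, ∀ c ∈ S, ∀ d ∈ S, σ a = σ c → σ b = σ d →
      G.Adj a b → G.Adj b c → G.Adj c d → G.Adj a d := by
  induction h with
  | single v =>
    rintro a rfl b rfl c hc d hd _ _ hab _ _
    exact absurd hab G.irrefl
  | join A B hA hB hdisj hadj hcol h1 h2 ih1 ih2 =>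
    rintro a ha b hb c hc d hd hac hbd hab hbc hcd
    rcases ha with ha | ha <;> rcases hd with hd | hd
    · have hbA : b ∈ A := by
        rcases hb with hb | hb
        · exact hb
        · exact absurd ⟨b, hb, rfl⟩ (Set.disjoint_left.mp hcol ⟨d, hd, hbd.symm⟩)
      have hcA : c ∈ A := by
        rcases hc with hc | hc
        · exact hc
        · exact absurd ⟨c, hc, rfl⟩ (Set.disjoint_left.mp hcol ⟨a, ha, hac⟩)
      exact ih1 a ha b hbA c hcA d hd hac hbd hab hbc hcd
    · exact hadj a ha d hd
    · exact (hadj d hd a ha).symm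
    · have hbB : b ∈ B := by
        rcases hb with hb | hb
        · exact absurd ⟨b, hb, rfl⟩ (Set.disjoint_right.mp hcol ⟨d, hd, hbd.symm⟩)
        · exact hb
      have hcB : c ∈ B := by
        rcases hc with hc | hc
        · exact absurd ⟨c, hc, rfl⟩ (Set.disjoint_right.mp hcol ⟨a, ha, hac⟩)
        · exact hc
      exact ih2 a ha b hbB c hcB d hd hac hbd hab hbc hcd
  | union A B hA hB hdisj hadj hcol h1 h2 ih1 ih2 =>
    rintro a ha b hb c hc d hd hac hbd hab hbc hcd
    rcases ha with ha | ha
    · have hbA : b ∈ A := by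
        rcases hb with hb | hb
        · exact hb
        · exact absurd hab (hadj a ha b hb)
      have hcA : c ∈ A := by
        rcases hc with hc | hc
        · exact hc
        · exact absurd hbc (hadj b hbA c hc)
      have hdA : d ∈ A := by
        rcases hd with hd | hd
        · exact hd
        · exact absurd hcd (hadj c hcA d hd)
      exact ih1 a ha b hbA c hcA d hdA hac hbd hab hbc hcd
    · have hbB : b ∈ B := by
        rcases hb with hb | hb
        · exact absurd hab.symm (hadj b hb a ha)
        · exact hb
      have hcB : c ∈ B := by
        rcases hc with hc | hc
        · exact absurd hbc.symm (hadj c hc b hbB)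
        · exact hc
      have hdB : d ∈ B := by
        rcases hd with hd | hd
        · exact absurd hcd.symm (hadj d hd c hcB)
        · exact hd
      exact ih2 a ha b hbB c hcB d hdB hac hbd hab hbc hcd

lemma walk_key (hprop : ∀ u v : V, G.Adj u v → σ u ≠ σ v)
    (h2 : (Set.range σ).ncard = 2)
    (hp4 : ∀ a b c d : V, σ a = σ c → σ b = σ d →
      G.Adj a b → G.Adj b c → G.Adj c d → G.Adj a d) :
    ∀ {u v : V}, G.Walk u v →
      (σ u ≠ σ v → G.Adj u v) ∧ (σ u = σ v → u = v ∨ ∃ w, G.Adj u w ∧ G.Adj w v) := by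
  intro u v p
  induction p with
  | nil => exact ⟨fun h => absurd rfl h, fun _ => Or.inl rfl⟩
  | @cons a b c h q ih =>
    have hab := hprop _ _ h
    constructor
    · intro hac
      have hbc : σ b = σ c := two_color h2 (Ne.symm hab) (Ne.symm hac)
      rcases ih.2 hbc with rfl | ⟨x, hbx, hxc⟩
      · exact h
      · exact hp4 a b x c (two_color h2 hab (Ne.symm (hprop _ _ hbx))) hbc h hbx hxc
    · intro hac
      exact Or.inr ⟨b, h, ih.1 fun e => hab (hac.trans e.symm)⟩


lemma closed_reach {S : Set V} (hclosed : ∀ u ∈ S, ∀ v, G.Adj u v → v ∈ S) :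
    ∀ {u x : V}, G.Walk u x → u ∈ S → x ∈ S := by
  intro u x p
  induction p with
  | nil => exact id
  | cons h q ih => exact fun hu => ih (hclosed _ hu _ h)


lemma hc_mono {S : Set V} (hfin : S.Finite) :
    S.Nonempty → (∀ u ∈ S, ∀ v ∈ S, ¬ G.Adj u v) → (∀ u ∈ S, ∀ v ∈ S, σ u = σ v) →
    HCOn G σ S := by
  refine Set.Finite.induction_on (motive := fun s _ => s.Nonempty →
      (∀ u ∈ s, ∀ v ∈ s, ¬ G.Adj u v) → (∀ u ∈ s, ∀ v ∈ s, σ u = σ v) → HCOn G σ s)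
    S hfin ?_ ?_
  · rintro ⟨x, hx⟩
    exact absurd hx (Set.notMem_empty x)
  · intro a s ha hs ih _ hadj hcol
    rcases s.eq_empty_or_nonempty with rfl | hne
    · have : (insert a ∅ : Set V) = {a} := by simp
      rw [this]
      exact HCOn.single a
    · rw [Set.insert_eq]
      refine HCOn.union {a} s ⟨a, rfl⟩ hne (Set.disjoint_singleton_left.mpr ha)
        ?_ (Or.inl ?_) (HCOn.single a)
        (ih hne (fun u hu v hv => hadj u (Set.mem_insert_of_mem a hu) v (Set.mem_insert_of_mem a hv))
          (fun u hu v hv => hcol u (Set.mem_insert_of_mem a hu) v (Set.mem_insert_of_mem a hv)))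
      · rintro u rfl v hv
        exact hadj u (Set.mem_insert u s) v (Set.mem_insert_of_mem u hv)
      · rintro x ⟨u, rfl, rfl⟩
        obtain ⟨b, hb⟩ := hne
        exact ⟨b, hb, hcol b (Set.mem_insert_of_mem u hb) u (Set.mem_insert u s)⟩

lemma image_eq_range [Fintype V] (h2 : (Set.range σ).ncard = 2) {S : Set V}
    {a b : V} (ha : a ∈ S) (hb : b ∈ S) (hne : σ a ≠ σ b) : σ '' S = Set.range σ := by
  have hfin : (Set.range σ).Finite := Set.finite_of_ncard_ne_zero (by rw [h2]; omega)
  have hsub : ({σ a, σ b} : Set C) ⊆ σ '' S := by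
    rintro x (rfl | rfl)
    · exact ⟨a, ha, rfl⟩
    · exact ⟨b, hb, rfl⟩
  refine Set.eq_of_subset_of_ncard_le (Set.image_subset_range σ S) ?_ hfin
  rw [h2]
  calc 2 = ({σ a, σ b} : Set C).ncard := (Set.ncard_pair hne).symm
    _ ≤ (σ '' S).ncard := Set.ncard_le_ncard hsub ((Set.toFinite S).image σ)

lemma hc_closed [Fintype V] (hprop : ∀ u v : V, G.Adj u v → σ u ≠ σ v)
    (h2 : (Set.range σ).ncard = 2) (hbic : IsBiclusterGraph G) :
    ∀ (n : ℕ) (S : Set V), S.ncard ≤ n →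
      (∀ u ∈ S, ∀ v, G.Adj u v → v ∈ S) →
      (∃ a ∈ S, ∃ b ∈ S, G.Adj a b) → HCOn G σ S := by
  intro n
  induction n with
  | zero =>
    rintro S hcard _ ⟨a, ha, _⟩
    have : S = ∅ := (Set.ncard_eq_zero (Set.toFinite S)).mp (Nat.le_zero.mp hcard)
    exact absurd (this ▸ ha) (Set.notMem_empty a)
  | succ n ih =>
    rintro S hcard hclosed ⟨a0, ha0, b0, hb0, hab0⟩
    by_cases hiso : ∃ v ∈ S, ∀ w, ¬ G.Adj v w
    · obtain ⟨v, hv, hviso⟩ := hiso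
      have hv0 : a0 ≠ v := fun h => hviso b0 (h ▸ hab0)
      have hv1 : b0 ≠ v := fun h => hviso a0 (h ▸ hab0.symm)
      have hS : S = {v} ∪ (S \ {v}) := by
        ext x; simp only [Set.mem_union, Set.mem_singleton_iff, Set.mem_diff]
        constructor
        · intro hx; by_cases h : x = v
          · exact Or.inl h
          · exact Or.inr ⟨hx, h⟩
        · rintro (rfl | ⟨hx, _⟩) <;> [exact hv; exact hx]
      rw [hS]
      have hedge' : ∃ x ∈ S \ {v}, ∃ y ∈ S \ {v}, G.Adj x y :=
        ⟨a0, ⟨ha0, hv0⟩, b0, ⟨hb0, hv1⟩, hab0⟩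
      refine HCOn.union ({v} : Set V) (S \ {v}) ⟨v, rfl⟩ ⟨a0, ha0, hv0⟩ ?_ ?_ (Or.inl ?_)
        (HCOn.single v) (ih (S \ {v}) ?_ ?_ hedge')
      · exact Set.disjoint_singleton_left.mpr (fun h => h.2 rfl)
      · rintro u rfl w _
        exact hviso w
      · rintro x ⟨u, hu, rfl⟩
        have him : σ '' (S \ {v}) = Set.range σ :=
          image_eq_range h2 ⟨ha0, hv0⟩ ⟨hb0, hv1⟩ (hprop _ _ hab0)
        rw [him]
        exact Set.mem_range_self u
      · have : (S \ {v}).ncard < S.ncard :=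
          Set.ncard_lt_ncard (Set.sdiff_singleton_ssubset.mpr hv) (Set.toFinite S)
        omega
      · rintro u ⟨hu, hu'⟩ w hw
        exact ⟨hclosed u hu w hw, fun h => hviso u (h ▸ hw.symm)⟩
    · push_neg at hiso
      obtain ⟨A, B, hsupp, hdisjAB, hiff⟩ := hbic (G.connectedComponentMk a0)
      have hDS : (G.connectedComponentMk a0).supp ⊆ S := by
        intro x hx
        have hr : G.Reachable a0 x :=
          (SimpleGraph.ConnectedComponent.eq.mp
            ((SimpleGraph.ConnectedComponent.mem_supp_iff _ _).mp hx)).symm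
        obtain ⟨p⟩ := hr
        exact closed_reach hclosed p ha0
      have ha0D : a0 ∈ (G.connectedComponentMk a0).supp :=
        (SimpleGraph.ConnectedComponent.mem_supp_iff _ _).mpr rfl
      have hb0D : b0 ∈ (G.connectedComponentMk a0).supp :=
        (SimpleGraph.ConnectedComponent.mem_supp_iff _ _).mpr
          (SimpleGraph.ConnectedComponent.connectedComponentMk_eq_of_adj hab0.symm)
      have hAsub : A ⊆ (G.connectedComponentMk a0).supp := hsupp ▸ Set.subset_union_left
      have hBsub : B ⊆ (G.connectedComponentMk a0).supp := hsupp ▸ Set.subset_union_right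
      have hABne : A.Nonempty ∧ B.Nonempty := by
        rcases (hiff a0 ha0D b0 hb0D).mp hab0 with ⟨h1, h1'⟩ | ⟨h1, h1'⟩
        · exact ⟨⟨a0, h1⟩, ⟨b0, h1'⟩⟩
        · exact ⟨⟨b0, h1'⟩, ⟨a0, h1⟩⟩
      obtain ⟨hAne, hBne⟩ := hABne
      have monoA : ∀ u ∈ A, ∀ v ∈ A, σ u = σ v := by
        intro u hu v hv
        obtain ⟨b, hbB⟩ := hBne
        have e1 : G.Adj u b := (hiff u (hAsub hu) b (hBsub hbB)).mpr (Or.inl ⟨hu, hbB⟩)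
        have e2 : G.Adj v b := (hiff v (hAsub hv) b (hBsub hbB)).mpr (Or.inl ⟨hv, hbB⟩)
        exact two_color h2 (hprop _ _ e1) (hprop _ _ e2)
      have monoB : ∀ u ∈ B, ∀ v ∈ B, σ u = σ v := by
        intro u hu v hv
        obtain ⟨a, haA⟩ := hAne
        have e1 : G.Adj u a := (hiff u (hBsub hu) a (hAsub haA)).mpr (Or.inr ⟨hu, haA⟩)
        have e2 : G.Adj v a := (hiff v (hBsub hv) a (hAsub haA)).mpr (Or.inr ⟨hv, haA⟩)
        exact two_color h2 (hprop _ _ e1) (hprop _ _ e2)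
      have edgelessA : ∀ u ∈ A, ∀ v ∈ A, ¬ G.Adj u v := by
        intro u hu v hv hadj
        rcases (hiff u (hAsub hu) v (hAsub hv)).mp hadj with ⟨_, h'⟩ | ⟨h', _⟩
        · exact Set.disjoint_left.mp hdisjAB hv h'
        · exact Set.disjoint_left.mp hdisjAB hu h'
      have edgelessB : ∀ u ∈ B, ∀ v ∈ B, ¬ G.Adj u v := by
        intro u hu v hv hadj
        rcases (hiff u (hBsub hu) v (hBsub hv)).mp hadj with ⟨h', _⟩ | ⟨_, h'⟩
        · exact Set.disjoint_left.mp hdisjAB h' hu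
        · exact Set.disjoint_left.mp hdisjAB h' hv
      have hcD : HCOn G σ (G.connectedComponentMk a0).supp := by
        rw [hsupp]
        refine HCOn.join A B hAne hBne hdisjAB
          (fun a ha b hb => (hiff a (hAsub ha) b (hBsub hb)).mpr (Or.inl ⟨ha, hb⟩)) ?_
          (hc_mono (Set.toFinite A) hAne edgelessA monoA)
          (hc_mono (Set.toFinite B) hBne edgelessB monoB)
        rw [Set.disjoint_left]
        rintro x ⟨u, hu, rfl⟩ ⟨w, hw, he⟩
        exact hprop u w ((hiff u (hAsub hu) w (hBsub hw)).mpr (Or.inl ⟨hu, hw⟩)) he.symm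
      by_cases hsub : S ⊆ (G.connectedComponentMk a0).supp
      · have : S = (G.connectedComponentMk a0).supp := hsub.antisymm hDS
        rw [this]; exact hcD
      · obtain ⟨x, hxS, hxD⟩ := Set.not_subset.mp hsub
        obtain ⟨w, hw⟩ := hiso x hxS
        have hwS : w ∈ S := hclosed x hxS w hw
        have hwD : w ∉ (G.connectedComponentMk a0).supp := by
          intro hwD
          exact hxD ((SimpleGraph.ConnectedComponent.mem_supp_iff _ _).mpr
            ((SimpleGraph.ConnectedComponent.connectedComponentMk_eq_of_adj hw).trans
              ((SimpleGraph.ConnectedComponent.mem_supp_iff _ _).mp hwD)))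
        rw [← Set.union_diff_cancel hDS]
        refine HCOn.union (G.connectedComponentMk a0).supp
          (S \ (G.connectedComponentMk a0).supp) ⟨a0, ha0D⟩ ⟨x, hxS, hxD⟩
          disjoint_sdiff_self_right ?_ (Or.inl ?_) hcD (ih _ ?_ ?_ ⟨x, ⟨hxS, hxD⟩, w, ⟨hwS, hwD⟩, hw⟩)
        · intro u hu v hv hadj
          exact hv.2 ((SimpleGraph.ConnectedComponent.mem_supp_iff _ _).mpr
            (((SimpleGraph.ConnectedComponent.connectedComponentMk_eq_of_adj hadj).symm).trans
              ((SimpleGraph.ConnectedComponent.mem_supp_iff _ _).mp hu)))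
        · rw [image_eq_range h2 ha0D hb0D (hprop _ _ hab0),
            image_eq_range h2 (Set.mem_diff_of_mem hxS hxD) (Set.mem_diff_of_mem hwS hwD)
              (hprop _ _ hw)]
        · have hlt : (S \ (G.connectedComponentMk a0).supp).ncard < S.ncard := by
            refine Set.ncard_lt_ncard ?_ (Set.toFinite S)
            rw [Set.ssubset_iff_of_subset Set.diff_subset]
            exact ⟨a0, ha0, fun h => h.2 ha0D⟩
          omega
        · rintro u ⟨hu, hu'⟩ v hv
          refine ⟨hclosed u hu v hv, fun hvD => hu' ?_⟩
          exact (SimpleGraph.ConnectedComponent.mem_supp_iff _ _).mpr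
            ((SimpleGraph.ConnectedComponent.connectedComponentMk_eq_of_adj hv).trans
              ((SimpleGraph.ConnectedComponent.mem_supp_iff _ _).mp hvD))


end Aux

/-- `(G, σ)` is a 2-hc-cograph (an hc-cograph using exactly two colors) if and
only if `(G, σ)` is a properly 2-colored bicluster graph containing at least one edge. -/
theorem two_hcCograph_iff_properly_two_colored_bicluster [Fintype V]
    (G : SimpleGraph V) (σ : V → C) :
    (IsHCCograph G σ ∧ (Set.range σ).ncard = 2) ↔
      ((∀ u v : V, G.Adj u v → σ u ≠ σ v) ∧ (Set.range σ).ncard = 2 ∧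
        IsBiclusterGraph G ∧ ∃ u v : V, G.Adj u v) := by
  constructor
  · rintro ⟨hhc, h2⟩
    have hprop : ∀ u v : V, G.Adj u v → σ u ≠ σ v :=
      fun u v h => hc_proper hhc u trivial v trivial h
    have hp4 : ∀ a b c d : V, σ a = σ c → σ b = σ d →
        G.Adj a b → G.Adj b c → G.Adj c d → G.Adj a d :=
      fun a b c d => hc_p4 hhc a trivial b trivial c trivial d trivial
    refine ⟨hprop, h2, ?_, ?_⟩
    · intro c
      obtain ⟨v0, hv0⟩ := c.exists_rep
      refine ⟨{v | v ∈ c.supp ∧ σ v = σ v0}, {v | v ∈ c.supp ∧ σ v ≠ σ v0}, ?_, ?_, ?_⟩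
      · ext z
        simp only [Set.mem_union, Set.mem_setOf_eq]
        constructor
        · intro hz
          by_cases h : σ z = σ v0
          · exact Or.inl ⟨hz, h⟩
          · exact Or.inr ⟨hz, h⟩
        · rintro (⟨hz, _⟩ | ⟨hz, _⟩) <;> exact hz
      · rw [Set.disjoint_left]
        rintro z ⟨_, h⟩ ⟨_, h'⟩
        exact h' h
      · intro u hu v hv
        constructor
        · intro hadj
          have hne := hprop u v hadj
          by_cases h : σ u = σ v0
          · exact Or.inl ⟨⟨hu, h⟩, ⟨hv, fun e => hne (h.trans e.symm)⟩⟩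
          · have hveq : σ v = σ v0 :=
              two_color h2 (Ne.symm hne) (fun e => h e.symm)
            exact Or.inr ⟨⟨hu, h⟩, ⟨hv, hveq⟩⟩
        · have hreach : G.Reachable u v :=
            SimpleGraph.ConnectedComponent.exact
              (((SimpleGraph.ConnectedComponent.mem_supp_iff _ _).mp hu).trans
                ((SimpleGraph.ConnectedComponent.mem_supp_iff _ _).mp hv).symm)
          obtain ⟨p⟩ := hreach
          rintro (⟨⟨_, he⟩, ⟨_, hne⟩⟩ | ⟨⟨_, hne⟩, ⟨_, he⟩⟩)
          · exact (walk_key hprop h2 hp4 p).1 fun e => hne (e.symm.trans he)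
          · exact (walk_key hprop h2 hp4 p).1 fun e => hne (e.trans he)
    · obtain ⟨x, y, hxy, hr⟩ := Set.ncard_eq_two.mp h2
      have hx : x ∈ Set.range σ := hr ▸ Set.mem_insert x {y}
      have hy : y ∈ Set.range σ := hr ▸ Set.mem_insert_of_mem x rfl
      obtain ⟨u, hu⟩ := hx
      obtain ⟨v, hv⟩ := hy
      obtain ⟨a, _, b, _, hab⟩ :=
        hc_edge hhc u trivial v trivial (by rw [hu, hv]; exact hxy)
      exact ⟨a, b, hab⟩
  · rintro ⟨hprop, h2, hbic, u0, v0, huv⟩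
    refine ⟨?_, h2⟩
    show HCOn G σ Set.univ
    exact hc_closed hprop h2 hbic (Set.ncard (Set.univ : Set V)) Set.univ le_rfl
      (fun _ _ v _ => trivial) ⟨u0, trivial, v0, trivial, huv⟩


end RBMGPaper
end

section
/- Let $(G,\sigma)$ be a properly colored graph with a hub-vertex $x$, and let $F$ be a subset of the edge set of $G$ of minimum cardinality such that $(G \setminus F, \sigma)$ is an hc-cograph. Then $F$ contains no edge incident to $x$. -/
namespace RBMGPaper

variable {V : Type*} {C : Type*}

lemma HCOn_congr {G G' : SimpleGraph V} {σ : V → C} {S : Set V} (h : HCOn G σ S)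
    (hagree : ∀ u ∈ S, ∀ v ∈ S, (G.Adj u v ↔ G'.Adj u v)) : HCOn G' σ S := by
  induction h with
  | single v => exact HCOn.single v
  | join A B hA hB hdisj hadj hcol h1 h2 ih1 ih2 =>
      exact HCOn.join A B hA hB hdisj
        (fun a ha b hb => (hagree a (Or.inl ha) b (Or.inr hb)).mp (hadj a ha b hb)) hcol
        (ih1 (fun u hu v hv => hagree u (Or.inl hu) v (Or.inl hv)))
        (ih2 (fun u hu v hv => hagree u (Or.inr hu) v (Or.inr hv)))
  | union A B hA hB hdisj hadj hcol h1 h2 ih1 ih2 =>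
      exact HCOn.union A B hA hB hdisj
        (fun a ha b hb h' => hadj a ha b hb ((hagree a (Or.inl ha) b (Or.inr hb)).mpr h')) hcol
        (ih1 (fun u hu v hv => hagree u (Or.inl hu) v (Or.inl hv)))
        (ih2 (fun u hu v hv => hagree u (Or.inr hu) v (Or.inr hv)))

lemma HCOn_erase {G : SimpleGraph V} {σ : V → C} {x : V} {S : Set V} (h : HCOn G σ S) :
    (∀ y ∈ S, y ≠ x → σ y ≠ σ x) → (S \ {x}).Nonempty → HCOn G σ (S \ {x}) := by
  induction h with
  | single v =>
      intro hx hne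
      have hxv : x ∉ ({v} : Set V) := by
        rintro hv
        obtain ⟨y, hy⟩ := hne
        simp only [Set.mem_singleton_iff] at hv
        subst hv
        simp at hy
      rw [Set.diff_singleton_eq_self hxv]
      exact HCOn.single v
  | join A B hA hB hdisj hadj hcol h1 h2 ih1 ih2 =>
      intro hx hne
      by_cases hxA : x ∈ A
      · have hxB : x ∉ B := fun hb => (hdisj.ne_of_mem hxA hb) rfl
        rw [Set.union_diff_distrib, Set.diff_singleton_eq_self hxB]
        by_cases hA' : (A \ {x}).Nonempty
        · exact HCOn.join (A \ {x}) B hA' hB (hdisj.mono_left Set.diff_subset)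
            (fun a ha b hb => hadj a ha.1 b hb)
            (hcol.mono_left (Set.image_mono Set.diff_subset))
            (ih1 (fun y hy => hx y (Or.inl hy)) hA') h2
        · rw [Set.not_nonempty_iff_eq_empty] at hA'
          rw [hA', Set.empty_union]
          exact h2
      · by_cases hxB : x ∈ B
        · rw [Set.union_diff_distrib, Set.diff_singleton_eq_self hxA]
          by_cases hB' : (B \ {x}).Nonempty
          · exact HCOn.join A (B \ {x}) hA hB' (hdisj.mono_right Set.diff_subset)
              (fun a ha b hb => hadj a ha b hb.1)
              (hcol.mono_right (Set.image_mono Set.diff_subset))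
              h1 (ih2 (fun y hy => hx y (Or.inr hy)) hB')
          · rw [Set.not_nonempty_iff_eq_empty] at hB'
            rw [hB', Set.union_empty]
            exact h1
        · have : x ∉ A ∪ B := by rintro (h | h) <;> [exact hxA h; exact hxB h]
          rw [Set.diff_singleton_eq_self this]
          exact HCOn.join A B hA hB hdisj hadj hcol h1 h2
  | union A B hA hB hdisj hadj hcol h1 h2 ih1 ih2 =>
      intro hx hne
      by_cases hxA : x ∈ A
      · have hxB : x ∉ B := fun hb => (hdisj.ne_of_mem hxA hb) rfl
        rw [Set.union_diff_distrib, Set.diff_singleton_eq_self hxB]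
        by_cases hA' : (A \ {x}).Nonempty
        · refine HCOn.union (A \ {x}) B hA' hB (hdisj.mono_left Set.diff_subset)
            (fun a ha b hb => hadj a ha.1 b hb) ?_
            (ih1 (fun y hy => hx y (Or.inl hy)) hA') h2
          rcases hcol with hAB | hBA
          · exfalso
            obtain ⟨b, hbB, hbx⟩ := hAB ⟨x, hxA, rfl⟩
            exact hx b (Or.inr hbB) (fun hb => hxB (hb ▸ hbB)) hbx
          · refine Or.inr ?_
            rintro c ⟨b, hbB, rfl⟩
            obtain ⟨a, haA, hab⟩ := hBA ⟨b, hbB, rfl⟩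
            have hax : a ≠ x := by
              rintro rfl
              exact hx b (Or.inr hbB) (fun hb => hxB (hb ▸ hbB)) hab.symm
            exact ⟨a, ⟨haA, hax⟩, hab⟩
        · rw [Set.not_nonempty_iff_eq_empty] at hA'
          rw [hA', Set.empty_union]
          exact h2
      · by_cases hxB : x ∈ B
        · rw [Set.union_diff_distrib, Set.diff_singleton_eq_self hxA]
          by_cases hB' : (B \ {x}).Nonempty
          · refine HCOn.union A (B \ {x}) hA hB' (hdisj.mono_right Set.diff_subset)
              (fun a ha b hb => hadj a ha b hb.1) ?_
              h1 (ih2 (fun y hy => hx y (Or.inr hy)) hB')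
            rcases hcol with hAB | hBA
            · refine Or.inl ?_
              rintro c ⟨a, haA, rfl⟩
              obtain ⟨b, hbB, hba⟩ := hAB ⟨a, haA, rfl⟩
              have hbx : b ≠ x := by
                rintro rfl
                exact hx a (Or.inl haA) (fun ha => hxA (ha ▸ haA)) hba.symm
              exact ⟨b, ⟨hbB, hbx⟩, hba⟩
            · exfalso
              obtain ⟨a, haA, hax⟩ := hBA ⟨x, hxB, rfl⟩
              exact hx a (Or.inl haA) (fun ha => hxA (ha ▸ haA)) hax
          · rw [Set.not_nonempty_iff_eq_empty] at hB'
            rw [hB', Set.union_empty]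
            exact h1
        · have : x ∉ A ∪ B := by rintro (h | h) <;> [exact hxA h; exact hxB h]
          rw [Set.diff_singleton_eq_self this]
          exact HCOn.union A B hA hB hdisj hadj hcol h1 h2

/-- Let `(G, σ)` be a properly colored graph with a hub-vertex `x`, and let `F`
be a minimum-cardinality subset of the edge set of `G` such that `(G \ F, σ)` is an hc-cograph.
Then `F` contains no edge incident to `x`. -/
theorem optimal_hc_deletion_avoids_hub [Fintype V] (G : SimpleGraph V) (σ : V → C) (x : V)
    (hprop : ∀ u v : V, G.Adj u v → σ u ≠ σ v)
    (hhub : ∀ v : V, v ≠ x → G.Adj x v)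
    (F : Set (Sym2 V)) (hFsub : F ⊆ G.edgeSet)
    (hF : IsHCCograph (G.deleteEdges F) σ)
    (hmin : ∀ F' ⊆ G.edgeSet, IsHCCograph (G.deleteEdges F') σ →
      F.ncard ≤ F'.ncard) :
    ∀ e ∈ F, x ∉ e := by
  intro e heF hxe
  -- x has a globally unique color
  have huniq : ∀ y : V, y ≠ x → σ y ≠ σ x := fun y hy => (hprop x y (hhub y hy)).symm
  -- the set F' of edges of F not incident to x
  set F' : Set (Sym2 V) := {f ∈ F | x ∉ f} with hF'def
  have hF'F : F' ⊆ F := fun f hf => hf.1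
  -- there is a vertex other than x (an endpoint of e)
  induction e using Sym2.ind with
  | _ u v =>
  have hadj_uv : G.Adj u v := (SimpleGraph.mem_edgeSet G).mp (hFsub heF)
  have hne : ((Set.univ : Set V) \ {x}).Nonempty := by
    rcases Sym2.mem_iff.mp hxe with h | h
    · exact ⟨v, Set.mem_univ v, fun hv => hadj_uv.ne' ((Set.mem_singleton_iff.mp hv).trans h)⟩
    · exact ⟨u, Set.mem_univ u, fun hu => hadj_uv.ne ((Set.mem_singleton_iff.mp hu).trans h)⟩
  -- (G \ F) restricted to univ \ {x} is an hc-cograph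
  have h1 : HCOn (G.deleteEdges F) σ (Set.univ \ {x}) :=
    HCOn_erase hF (fun y _ hy => huniq y hy) hne
  -- transfer to G \ F'
  have h2 : HCOn (G.deleteEdges F') σ (Set.univ \ {x}) := by
    refine HCOn_congr h1 (fun a ha b hb => ?_)
    simp only [SimpleGraph.deleteEdges_adj]
    constructor
    · rintro ⟨hab, hnf⟩
      exact ⟨hab, fun hf => hnf hf.1⟩
    · rintro ⟨hab, hnf⟩
      refine ⟨hab, fun hf => hnf ⟨hf, ?_⟩⟩
      rintro hxab
      rcases Sym2.mem_iff.mp hxab with h | h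
      · exact ha.2 (Set.mem_singleton_iff.mpr h.symm)
      · exact hb.2 (Set.mem_singleton_iff.mpr h.symm)
  -- rejoin x as a hub
  have h3 : HCOn (G.deleteEdges F') σ ({x} ∪ (Set.univ \ {x})) := by
    refine HCOn.join {x} (Set.univ \ {x}) ⟨x, rfl⟩ hne ?_ ?_ ?_ (HCOn.single x) h2
    · refine Set.disjoint_left.mpr (fun a ha hb => ?_)
      rw [Set.mem_singleton_iff] at ha
      exact hb.2 (Set.mem_singleton_iff.mpr ha)
    · intro a ha b hb
      rw [Set.mem_singleton_iff] at ha
      subst ha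
      rw [SimpleGraph.deleteEdges_adj]
      exact ⟨hhub b (fun h => hb.2 (Set.mem_singleton_iff.mpr h)),
        fun hf => hf.2 (Sym2.mem_mk_left a b)⟩
    · rw [Set.image_singleton]
      refine Set.disjoint_left.mpr ?_
      rintro c rfl ⟨y, hy, hyc⟩
      exact huniq y hy.2 hyc
  have hF' : IsHCCograph (G.deleteEdges F') σ := by
    have : ({x} : Set V) ∪ (Set.univ \ {x}) = Set.univ := by
      rw [Set.union_diff_cancel (by simp)]
    rwa [this] at h3
  -- F' is strictly smaller than F: contradiction with minimality
  have hssub : F' ⊂ F := ⟨hF'F, fun hFF' => (hFF' heF).2 hxe⟩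
  have hlt : F'.ncard < F.ncard := Set.ncard_lt_ncard hssub F.toFinite
  exact absurd (hmin F' (hF'F.trans hFsub) hF') (not_le.mpr hlt)

end RBMGPaper
end
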